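/- Let G be a finite group acting on a nonempty finite set X, and let n, a be positive integers with n < a such that for every subset Y ⊆ X with |Y| ≤ n, every orbit of the pointwise stabilizer G_Y on X \ Y has size at least a. Let w be a nontrivial reduced word of length n in the free group on k generators. Then the number of tuples (g_1, …, g_k) ∈ G^k with w(g_1, …, g_k) ≠ 1 is at least (1 − n/a)^n · |G|^k; equivalently, the probability that w is not satisfied by a uniformly random k-tuple of elements of G is at least (1 − n/a)^n. -/

import Mathlib

set_option maxHeartbeats 800000

set_option linter.unusedSectionVars false

namespace SepWordAux

variable {G X : Type*} [Group G] [Fintype G] [Fintype X] [MulAction G X] {k : ℕ}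

def sig (g : Fin k → G) (c : Fin k × Bool) : G := cond c.2 (g c.1) (g c.1)⁻¹

def wp (g : Fin k → G) (t : List (Fin k × Bool)) : G := (t.map (sig g)).prod

def pts (x₀ : X) (g : Fin k → G) (t : List (Fin k × Bool)) : List X :=
  t.tails.map (fun t' => wp g t' • x₀)

lemma wp_nil (g : Fin k → G) : wp g ([] : List (Fin k × Bool)) = 1 := rfl

lemma wp_cons (g : Fin k → G) (c : Fin k × Bool) (t : List (Fin k × Bool)) :
    wp g (c :: t) = sig g c * wp g t := by simp [wp]

lemma pts_nil (x₀ : X) (g : Fin k → G) : pts x₀ g ([] : List (Fin k × Bool)) = [x₀] := by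
  simp [pts, wp]

lemma pts_cons (x₀ : X) (g : Fin k → G) (c : Fin k × Bool) (t : List (Fin k × Bool)) :
    pts x₀ g (c :: t) = (wp g (c :: t) • x₀) :: pts x₀ g t := by
  simp [pts]

lemma sig_inv (g : Fin k → G) (i : Fin k) (b : Bool) :
    sig g (i, !b) = (sig g (i, b))⁻¹ := by cases b <;> simp [sig]

def upd (g : Fin k → G) (c : Fin k × Bool) (s : G) : Fin k → G :=
  Function.update g c.1 (cond c.2 (s * g c.1) (g c.1 * s⁻¹))

lemma sig_upd (g : Fin k → G) (c : Fin k × Bool) (s : G) (d : Fin k × Bool) :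
    sig (upd g c s) d =
      if d = c then s * sig g d else
      if d = (c.1, !c.2) then sig g d * s⁻¹ else sig g d := by
  obtain ⟨i, b⟩ := c
  obtain ⟨j, e⟩ := d
  by_cases hj : j = i
  · subst hj
    cases b <;> cases e <;> simp [sig, upd, mul_inv_rev]
  · simp [sig, upd, Function.update_of_ne hj, Prod.ext_iff, hj]

lemma upd_upd (g : Fin k → G) (c : Fin k × Bool) (s s' : G) :
    upd (upd g c s') c s = upd g c (s * s') := by
  obtain ⟨i, b⟩ := c
  funext j
  by_cases hj : j = i
  · subst hj
    cases b <;> simp [upd, mul_assoc, mul_inv_rev]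
  · simp [upd, Function.update_of_ne hj]

lemma upd_one (g : Fin k → G) (c : Fin k × Bool) : upd g c 1 = g := by
  obtain ⟨i, b⟩ := c
  cases b <;> simp [upd]

section Qf

variable [DecidableEq X]

/-- The set of points at which the action of the letter `c` is forced by the
trajectory of the suffix `t`. -/
def Qf (x₀ : X) (g : Fin k → G) (c : Fin k × Bool) : List (Fin k × Bool) → Finset X
  | [] => ∅
  | d :: t => (if d = c then {sig g d • wp g t • x₀} else
      if d = (c.1, !c.2) then {wp g t • x₀} else ∅) ∪ Qf x₀ g c t

lemma Qf_card_le (x₀ : X) (g : Fin k → G) (c : Fin k × Bool) (t : List (Fin k × Bool)) :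
    (Qf x₀ g c t).card ≤ t.length := by
  induction t with
  | nil => simp [Qf]
  | cons d t ih =>
    refine le_trans (Finset.card_union_le _ _) ?_
    have h1 : (if d = c then ({sig g d • wp g t • x₀} : Finset X) else
        if d = (c.1, !c.2) then {wp g t • x₀} else ∅).card ≤ 1 := by
      split <;> [skip; split] <;> simp
    simpa [Qf, Nat.add_comm] using Nat.add_le_add h1 ih

lemma Qf_subset_cons (x₀ : X) (g : Fin k → G) (c d : Fin k × Bool) (t : List (Fin k × Bool)) :
    Qf x₀ g c t ⊆ Qf x₀ g c (d :: t) := by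
  simp [Qf]

lemma Qf_subset_of_suffix (x₀ : X) (g : Fin k → G) (c : Fin k × Bool)
    {t' t : List (Fin k × Bool)} (h : t' <:+ t) : Qf x₀ g c t' ⊆ Qf x₀ g c t := by
  induction t with
  | nil => simpa using (by simpa using h : t' = []) ▸ le_refl _
  | cons d t ih =>
    rcases List.suffix_cons_iff.mp h with h | h
    · exact h ▸ le_refl _
    · exact (ih h).trans (Qf_subset_cons x₀ g c d t)

/-- Membership in `Qf` gives a witness suffix. -/
lemma Qf_mem (x₀ : X) (g : Fin k → G) (c : Fin k × Bool) {t : List (Fin k × Bool)} {q : X}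
    (h : q ∈ Qf x₀ g c t) :
    ∃ d t', (d :: t') <:+ t ∧ ((d = c ∧ q = sig g d • wp g t' • x₀) ∨
      (d = (c.1, !c.2) ∧ q = wp g t' • x₀)) := by
  induction t with
  | nil => simp [Qf] at h
  | cons d t ih =>
    rw [Qf, Finset.mem_union] at h
    rcases h with h | h
    · by_cases h1 : d = c
      · rw [if_pos h1, Finset.mem_singleton] at h
        exact ⟨d, t, List.suffix_refl _, Or.inl ⟨h1, h⟩⟩
      · rw [if_neg h1] at h
        by_cases h2 : d = (c.1, !c.2)
        · rw [if_pos h2, Finset.mem_singleton] at h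
          exact ⟨d, t, List.suffix_refl _, Or.inr ⟨h2, h⟩⟩
        · simp [h2] at h
    · obtain ⟨d', t', hs, hc⟩ := ih h
      exact ⟨d', t', hs.trans (List.suffix_cons d t), hc⟩

/-- Invariance of the trajectory endpoint under the update by a stabilizer element. -/
lemma wp_upd (x₀ : X) (g : Fin k → G) (c : Fin k × Bool) (s : G) {t : List (Fin k × Bool)}
    (hs : ∀ q ∈ Qf x₀ g c t, s • q = q) :
    wp (upd g c s) t • x₀ = wp g t • x₀ := by
  induction t with
  | nil => simp [wp_nil]
  | cons d t ih =>
    have hs' : ∀ q ∈ Qf x₀ g c t, s • q = q := fun q hq =>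
      hs q (Qf_subset_cons x₀ g c d t hq)
    rw [wp_cons, wp_cons, mul_smul, mul_smul, ih hs', sig_upd]
    by_cases h1 : d = c
    · rw [if_pos h1, mul_smul]
      exact hs _ (by rw [Qf, Finset.mem_union, if_pos h1]; simp)
    · rw [if_neg h1]
      by_cases h2 : d = (c.1, !c.2)
      · rw [if_pos h2, mul_smul]
        have : s • (wp g t • x₀) = wp g t • x₀ :=
          hs _ (by rw [Qf, Finset.mem_union, if_neg h1, if_pos h2]; simp)
        rw [inv_smul_eq_iff.mpr this.symm]
      · rw [if_neg h2]

lemma wp_upd_head (x₀ : X) (g : Fin k → G) (c : Fin k × Bool) (s : G)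
    {t : List (Fin k × Bool)} (hs : ∀ q ∈ Qf x₀ g c t, s • q = q) :
    wp (upd g c s) (c :: t) • x₀ = s • (wp g (c :: t) • x₀) := by
  rw [wp_cons, wp_cons, mul_smul, mul_smul, wp_upd x₀ g c s hs, sig_upd, if_pos rfl, mul_smul]

lemma pts_upd (x₀ : X) (g : Fin k → G) (c : Fin k × Bool) (s : G) {t : List (Fin k × Bool)}
    (hs : ∀ q ∈ Qf x₀ g c t, s • q = q) :
    pts x₀ (upd g c s) t = pts x₀ g t := by
  unfold pts
  refine List.map_congr_left (fun t' ht' => ?_)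
  exact wp_upd x₀ g c s (fun q hq =>
    hs q (Qf_subset_of_suffix x₀ g c ((List.mem_tails _ _).mp ht') hq))

lemma Qf_upd (x₀ : X) (g : Fin k → G) (c : Fin k × Bool) (s : G) {t : List (Fin k × Bool)}
    (hs : ∀ q ∈ Qf x₀ g c t, s • q = q) :
    Qf x₀ (upd g c s) c t = Qf x₀ g c t := by
  induction t with
  | nil => rfl
  | cons d t ih =>
    have hs' : ∀ q ∈ Qf x₀ g c t, s • q = q := fun q hq =>
      hs q (Qf_subset_cons x₀ g c d t hq)
    rw [Qf, Qf, ih hs']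
    congr 1
    have hw : wp (upd g c s) t • x₀ = wp g t • x₀ := wp_upd x₀ g c s hs'
    by_cases h1 : d = c
    · rw [if_pos h1, if_pos h1]
      have hfix : s • (sig g d • wp g t • x₀) = sig g d • wp g t • x₀ :=
        hs _ (by rw [Qf, Finset.mem_union, if_pos h1]; simp)
      rw [sig_upd, if_pos h1, hw, mul_smul, hfix]
    · rw [if_neg h1, if_neg h1]
      by_cases h2 : d = (c.1, !c.2)
      · rw [if_pos h2, if_pos h2, hw]
      · rw [if_neg h2, if_neg h2]

/-- The new trajectory point is never a forced point (freshness). -/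
lemma fresh (x₀ : X) (g : Fin k → G) (c : Fin k × Bool) {t : List (Fin k × Bool)}
    (hnd : (pts x₀ g t).Nodup)
    (hred : ∀ t'', t ≠ (c.1, !c.2) :: t'') :
    wp g (c :: t) • x₀ ∉ Qf x₀ g c t := by
  intro h
  obtain ⟨d, t', hsuf, hc⟩ := Qf_mem x₀ g c h
  have hnd' : (t.tails.map (fun t' => wp g t' • x₀)).Nodup := hnd
  have inj := List.inj_on_of_nodup_map hnd'
  have htm : t ∈ t.tails := (List.mem_tails _ _).mpr (List.suffix_refl t)
  have ht'm : t' ∈ t.tails := (List.mem_tails _ _).mpr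
    (((List.suffix_cons d t').trans hsuf))
  have hdm : d :: t' ∈ t.tails := (List.mem_tails _ _).mpr hsuf
  rcases hc with ⟨hd, hq⟩ | ⟨hd, hq⟩
  · subst hd
    rw [wp_cons, mul_smul] at hq
    have : wp g t • x₀ = wp g t' • x₀ := smul_left_cancel _ hq
    have htt : t = t' := inj htm ht'm this
    have := hsuf.length_le
    rw [← htt] at this
    simp at this
  · subst hd
    have hfd : wp g (((c.1, !c.2)) :: t') • x₀ = wp g t • x₀ := by
      rw [wp_cons, mul_smul, ← hq, wp_cons, mul_smul]
      have : sig g (c.1, !c.2) = (sig g c)⁻¹ := by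
        have := sig_inv g c.1 c.2
        simpa using this
      rw [this, inv_smul_smul]
    have := inj hdm htm hfd
    exact hred t' this.symm

/-- Generic coset-counting bound: the number of elements of a subgroup-like
finset `S` moving `x` into `P` is at most `P.card * S.card / a` when the
orbit of `x` under `S` has at least `a` elements. -/
lemma count_bad (S : Finset G) (hmul : ∀ s ∈ S, ∀ r ∈ S, s * r ∈ S)
    (hinv : ∀ s ∈ S, s⁻¹ ∈ S) (x : X) (P : Finset X) (a : ℕ)
    (hO : a ≤ (S.image (fun s => s • x)).card) :
    (S.filter (fun s => s • x ∈ P)).card * a ≤ P.card * S.card := by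
  set O := S.image (fun s => s • x) with hOdef
  set stab := S.filter (fun s => s • x = x) with hstabdef
  have fiber_le : ∀ z : X, (S.filter (fun s => s • x = z)).card ≤ stab.card := by
    intro z
    rcases (S.filter (fun s => s • x = z)).eq_empty_or_nonempty with he | ⟨h, hh⟩
    · simp [he]
    · rw [Finset.mem_filter] at hh
      refine Finset.card_le_card_of_injOn (fun s => h⁻¹ * s) ?_ ?_
      · intro s hs
        simp only [Finset.mem_coe, hstabdef, Finset.mem_filter] at hs ⊢
        refine ⟨hmul _ (hinv _ hh.1) _ hs.1, ?_⟩
        rw [mul_smul, hs.2, inv_smul_eq_iff, hh.2]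
      · intro s₁ _ s₂ _ hss
        exact mul_left_cancel hss
  have fiber_ge : ∀ z ∈ O, stab.card ≤ (S.filter (fun s => s • x = z)).card := by
    intro z hz
    rw [hOdef, Finset.mem_image] at hz
    obtain ⟨h, hhS, hhx⟩ := hz
    refine Finset.card_le_card_of_injOn (fun s => h * s) ?_ ?_
    · intro s hs
      simp only [Finset.mem_coe, hstabdef, Finset.mem_filter] at hs ⊢
      exact ⟨hmul _ hhS _ hs.1, by rw [mul_smul, hs.2, hhx]⟩
    · intro s₁ _ s₂ _ hss
      exact mul_left_cancel hss
  have hcard : S.card = O.card * stab.card := by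
    rw [Finset.card_eq_sum_card_fiberwise (f := fun s => s • x) (t := O)
      (fun s hs => Finset.mem_image_of_mem _ hs)]
    rw [Finset.sum_congr rfl (fun z hz => le_antisymm (fiber_le z) (fiber_ge z hz))]
    simp [mul_comm]
  have hbad : (S.filter (fun s => s • x ∈ P)).card ≤ P.card * stab.card := by
    rw [Finset.card_eq_sum_card_fiberwise (f := fun s => s • x) (t := P) (s := S.filter (fun s => s • x ∈ P))
      (fun s hs => (Finset.mem_filter.mp (Finset.mem_coe.mp hs)).2)]
    calc ∑ z ∈ P, ((S.filter (fun s => s • x ∈ P)).filter (fun s => s • x = z)).card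
        ≤ ∑ z ∈ P, stab.card := by
          refine Finset.sum_le_sum (fun z _ => ?_)
          exact le_trans (Finset.card_le_card (by
            intro s hs
            rw [Finset.mem_filter] at hs ⊢
            exact ⟨(Finset.mem_filter.mp hs.1).1, hs.2⟩)) (fiber_le z)
      _ = P.card * stab.card := by simp [mul_comm]
  calc (S.filter (fun s => s • x ∈ P)).card * a
      ≤ (P.card * stab.card) * a := Nat.mul_le_mul_right a hbad
    _ = P.card * (stab.card * a) := by ring
    _ ≤ P.card * (stab.card * O.card) := by
        exact Nat.mul_le_mul_left _ (Nat.mul_le_mul_left _ hO)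
    _ = P.card * S.card := by rw [hcard]; ring




/-- The pointwise stabilizer of the forced set, as a finset. -/
def Sfin (x₀ : X) (g : Fin k → G) (c : Fin k × Bool) (t : List (Fin k × Bool)) : Finset G :=
  Finset.univ.filter (fun s => ∀ q ∈ Qf x₀ g c t, s • q = q)

lemma mem_Sfin {x₀ : X} {g : Fin k → G} {c : Fin k × Bool} {t : List (Fin k × Bool)}
    {s : G} : s ∈ Sfin x₀ g c t ↔ ∀ q ∈ Qf x₀ g c t, s • q = q := by
  simp [Sfin]

lemma one_mem_Sfin (x₀ : X) (g : Fin k → G) (c : Fin k × Bool) (t : List (Fin k × Bool)) :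
    (1 : G) ∈ Sfin x₀ g c t := mem_Sfin.mpr (fun q _ => one_smul _ _)

lemma mul_mem_Sfin {x₀ : X} {g : Fin k → G} {c : Fin k × Bool} {t : List (Fin k × Bool)}
    {s r : G} (hs : s ∈ Sfin x₀ g c t) (hr : r ∈ Sfin x₀ g c t) :
    s * r ∈ Sfin x₀ g c t := by
  rw [mem_Sfin] at hs hr ⊢
  intro q hq
  rw [mul_smul, hr q hq, hs q hq]

lemma inv_mem_Sfin {x₀ : X} {g : Fin k → G} {c : Fin k × Bool} {t : List (Fin k × Bool)}
    {s : G} (hs : s ∈ Sfin x₀ g c t) : s⁻¹ ∈ Sfin x₀ g c t := by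
  rw [mem_Sfin] at hs ⊢
  intro q hq
  rw [inv_smul_eq_iff, hs q hq]

lemma Sfin_upd {x₀ : X} {g : Fin k → G} {c : Fin k × Bool} {t : List (Fin k × Bool)}
    {s : G} (hs : s ∈ Sfin x₀ g c t) :
    Sfin x₀ (upd g c s) c t = Sfin x₀ g c t := by
  unfold Sfin
  rw [Qf_upd x₀ g c s (mem_Sfin.mp hs)]

/-- The tuples whose trajectory along `t` consists of pairwise distinct points. -/
def TT (x₀ : X) (t : List (Fin k × Bool)) : Finset (Fin k → G) :=
  Finset.univ.filter (fun g => (pts x₀ g t).Nodup)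

lemma mem_TT {x₀ : X} {t : List (Fin k × Bool)} {g : Fin k → G} :
    g ∈ TT x₀ t ↔ (pts x₀ g t).Nodup := by simp [TT]

/-- The main step inequality. -/
lemma step (x₀ : X) (n a : ℕ) (ha : 0 < a)
    (hsep : ∀ Y : Finset X, Y.card ≤ n → ∀ x : X, x ∉ Y →
      a ≤ {z : X | ∃ g : G, (∀ y ∈ Y, g • y = y) ∧ g • x = z}.ncard)
    (c : Fin k × Bool) (t : List (Fin k × Bool))
    (hlen : t.length + 1 ≤ n)
    (hred : ∀ t'', t ≠ (c.1, !c.2) :: t'') :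
    (1 - (n : ℝ) / a) * ((TT (G := G) x₀ t).card : ℝ) ≤ ((TT (G := G) x₀ (c :: t)).card : ℝ) := by
  classical
  have ha' : (0 : ℝ) < a := by exact_mod_cast ha
  set S : (Fin k → G) → Finset G := fun g => Sfin x₀ g c t with hS
  set good : (Fin k → G) → Finset G :=
    fun g => (S g).filter (fun s => upd g c s ∈ TT x₀ (c :: t)) with hgood
  have hSpos : ∀ g : Fin k → G, 0 < ((S g).card : ℝ) := by
    intro g
    have : (1 : G) ∈ S g := one_mem_Sfin x₀ g c t
    exact_mod_cast Finset.card_pos.mpr ⟨1, this⟩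
  -- characterization of `good`
  have hchar : ∀ g : Fin k → G, (pts x₀ g t).Nodup → ∀ s ∈ S g,
      (upd g c s ∈ TT x₀ (c :: t) ↔ s • (wp g (c :: t) • x₀) ∉ pts x₀ g t) := by
    intro g hg s hsS
    have hfix := mem_Sfin.mp hsS
    rw [mem_TT, pts_cons, wp_upd_head x₀ g c s hfix, pts_upd x₀ g c s hfix,
      List.nodup_cons]
    exact ⟨fun h => h.1, fun h => ⟨h, hg⟩⟩
  -- per-tuple bound
  have hper : ∀ g ∈ TT x₀ t,
      (1 - (n : ℝ) / a) * ((S g).card : ℝ) ≤ ((good g).card : ℝ) := by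
    intro g hgT
    have hg : (pts x₀ g t).Nodup := mem_TT.mp hgT
    set x : X := wp g (c :: t) • x₀ with hx
    set P : Finset X := (pts x₀ g t).toFinset with hP
    have hgood2 : good g = (S g).filter (fun s => s • x ∉ P) := by
      apply Finset.filter_congr
      intro s hsS
      simp only [hP, List.mem_toFinset, eq_iff_iff]
      exact hchar g hg s hsS
    set bad : Finset G := (S g).filter (fun s => s • x ∈ P) with hbad
    have hsum : (good g).card + bad.card = (S g).card := by
      rw [hgood2]
      have hb : bad = (S g).filter (fun s => ¬ s • x ∉ P) := by
        rw [hbad]; congr 1; ext s; simp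
      rw [hb]
      exact Finset.card_filter_add_card_filter_not _
    -- orbit lower bound
    have hO : a ≤ ((S g).image (fun s => s • x)).card := by
      have hQc : (Qf x₀ g c t).card ≤ n :=
        le_trans (Qf_card_le x₀ g c t) (by omega)
      have hxQ : x ∉ Qf x₀ g c t := fresh x₀ g c hg hred
      have := hsep (Qf x₀ g c t) hQc x hxQ
      have hset : {z : X | ∃ g' : G, (∀ y ∈ Qf x₀ g c t, g' • y = y) ∧ g' • x = z} =
          ↑((S g).image (fun s => s • x)) := by
        ext z
        simp only [Set.mem_setOf_eq, Finset.coe_image, Set.mem_image, Finset.mem_coe,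
          hS, mem_Sfin]
      rw [hset, Set.ncard_coe_finset] at this
      exact this
    have hcb : bad.card * a ≤ P.card * (S g).card :=
      count_bad (S g) (fun s hs r hr => mul_mem_Sfin hs hr)
        (fun s hs => inv_mem_Sfin hs) x P a hO
    have hPn : P.card ≤ n := by
      refine le_trans (List.toFinset_card_le _) ?_
      have : (pts x₀ g t).length = t.length + 1 := by
        simp [pts]
      omega
    have hcb2 : (bad.card : ℝ) * a ≤ (n : ℝ) * (S g).card := by
      have : bad.card * a ≤ n * (S g).card :=
        le_trans hcb (Nat.mul_le_mul_right _ hPn)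
      exact_mod_cast this
    have hsum' : ((good g).card : ℝ) + bad.card = (S g).card := by exact_mod_cast hsum
    have hexp : (1 - (n : ℝ) / a) * ((S g).card : ℝ) =
        (((S g).card : ℝ) * a - n * (S g).card) / a := by
      field_simp
    rw [hexp, div_le_iff₀ ha']
    nlinarith [hcb2, hsum']
  -- the key identity
  have hkey : ∑ g ∈ TT x₀ t, ((good g).card : ℝ) / ((S g).card : ℝ) =
      ((TT (G := G) x₀ (c :: t)).card : ℝ) := by
    have lhs : ∑ g ∈ TT x₀ t, ((good g).card : ℝ) / ((S g).card : ℝ) =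
        ∑ p ∈ (TT x₀ t).sigma good, (1 : ℝ) / ((S p.1).card : ℝ) := by
      rw [Finset.sum_sigma]
      refine Finset.sum_congr rfl (fun g _ => ?_)
      show ((good g).card : ℝ) / ((S g).card : ℝ) = ∑ _s ∈ good g, 1 / ((S g).card : ℝ)
      rw [Finset.sum_const, nsmul_eq_mul, mul_one_div]
    have rhs : ((TT (G := G) x₀ (c :: t)).card : ℝ) =
        ∑ q ∈ (TT (G := G) x₀ (c :: t)).sigma S, (1 : ℝ) / ((S q.1).card : ℝ) := by
      rw [Finset.sum_sigma]
      rw [Finset.card_eq_sum_ones]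
      push_cast
      refine Finset.sum_congr rfl (fun h _ => ?_)
      show (1 : ℝ) = ∑ _s ∈ S h, 1 / ((S h).card : ℝ)
      rw [Finset.sum_const, nsmul_eq_mul, mul_one_div, div_self (ne_of_gt (hSpos h))]
    rw [lhs, rhs]
    refine Finset.sum_bij' (fun p _ => (⟨upd p.1 c p.2, p.2⟩ : (_ : Fin k → G) × G))
      (fun q _ => (⟨upd q.1 c q.2⁻¹, q.2⟩ : (_ : Fin k → G) × G)) ?_ ?_ ?_ ?_ ?_
    · -- maps into B
      rintro ⟨g, s⟩ hp
      rw [Finset.mem_sigma] at hp ⊢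
      obtain ⟨hgT, hsg⟩ := hp
      rw [hgood, Finset.mem_filter] at hsg
      refine ⟨hsg.2, ?_⟩
      show s ∈ Sfin x₀ (upd g c s) c t
      rw [Sfin_upd hsg.1]
      exact hsg.1
    · -- maps into A
      rintro ⟨h, s⟩ hq
      rw [Finset.mem_sigma] at hq ⊢
      obtain ⟨hhT, hsh⟩ := hq
      have hsi : s⁻¹ ∈ Sfin x₀ h c t := inv_mem_Sfin hsh
      have hfix := mem_Sfin.mp hsi
      have hptseq : pts x₀ (upd h c s⁻¹) t = pts x₀ h t := pts_upd x₀ h c s⁻¹ hfix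
      have hhT' : (pts x₀ h t).Nodup := by
        have := mem_TT.mp hhT
        rw [pts_cons, List.nodup_cons] at this
        exact this.2
      constructor
      · rw [mem_TT, hptseq]; exact hhT'
      · rw [hgood, Finset.mem_filter]
        constructor
        · show s ∈ Sfin x₀ (upd h c s⁻¹) c t
          rw [Sfin_upd hsi]
          exact hsh
        · rw [upd_upd, mul_inv_cancel, upd_one]
          exact hhT
    · -- left inverse
      rintro ⟨g, s⟩ _
      simp only [upd_upd, inv_mul_cancel, upd_one]
    · -- right inverse
      rintro ⟨h, s⟩ _
      simp only [upd_upd, mul_inv_cancel, upd_one]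
    · -- values agree
      rintro ⟨g, s⟩ hp
      rw [Finset.mem_sigma] at hp
      have hsg := hp.2
      rw [hgood, Finset.mem_filter] at hsg
      have : S (upd g c s) = S g := Sfin_upd hsg.1
      rw [this]
  -- combine
  calc (1 - (n : ℝ) / a) * ((TT x₀ t).card : ℝ)
      = ∑ _g ∈ TT (G := G) x₀ t, (1 - (n : ℝ) / a) := by
        rw [Finset.sum_const, nsmul_eq_mul, mul_comm]
    _ ≤ ∑ g ∈ TT x₀ t, ((good g).card : ℝ) / ((S g).card : ℝ) := by
        refine Finset.sum_le_sum (fun g hg => ?_)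
        rw [le_div_iff₀ (hSpos g)]
        exact hper g hg
    _ = ((TT (G := G) x₀ (c :: t)).card : ℝ) := hkey


/-- Iterating the step inequality along suffixes of the reduced word. -/
lemma chain (x₀ : X) (n a : ℕ) (ha : 0 < a) (hna : n < a)
    (hsep : ∀ Y : Finset X, Y.card ≤ n → ∀ x : X, x ∉ Y →
      a ≤ {z : X | ∃ g : G, (∀ y ∈ Y, g • y = y) ∧ g • x = z}.ncard)
    (L : List (Fin k × Bool))
    (hredL : ∀ (u v : List (Fin k × Bool)) (x : Fin k) (b : Bool),
      L ≠ u ++ (x, b) :: (x, !b) :: v)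
    (hLn : L.length = n) :
    ∀ t : List (Fin k × Bool), t <:+ L →
      (1 - (n : ℝ) / a) ^ t.length * (Fintype.card G : ℝ) ^ k ≤
        ((TT (G := G) x₀ t).card : ℝ) := by
  have h0 : (0 : ℝ) ≤ 1 - (n : ℝ) / a := by
    have ha' : (0 : ℝ) < a := by exact_mod_cast ha
    rw [sub_nonneg, div_le_one ha']
    exact_mod_cast hna.le
  intro t
  induction t with
  | nil =>
    intro _
    have hTuniv : TT (G := G) x₀ ([] : List (Fin k × Bool)) = Finset.univ := by
      ext g
      simp [mem_TT, pts, wp]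
    rw [hTuniv]
    simp only [List.length_nil, pow_zero, one_mul, Finset.card_univ]
    rw [show Fintype.card (Fin k → G) = Fintype.card G ^ k by
      rw [Fintype.card_pi]; simp]
    norm_num
  | cons c t ih =>
    intro hsuf
    have ht : t <:+ L := (List.suffix_cons c t).trans hsuf
    have hlen1 : t.length + 1 ≤ n := by
      have := hsuf.length_le
      rw [hLn] at this
      simpa using this
    have hred : ∀ t'', t ≠ (c.1, !c.2) :: t'' := by
      intro t'' ht''
      obtain ⟨u, hu⟩ := hsuf
      refine hredL u t'' c.1 c.2 ?_
      rw [← hu, ht'']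
    calc (1 - (n : ℝ) / a) ^ (c :: t).length * (Fintype.card G : ℝ) ^ k
        = (1 - (n : ℝ) / a) * ((1 - (n : ℝ) / a) ^ t.length * (Fintype.card G : ℝ) ^ k) := by
          rw [List.length_cons]; ring
      _ ≤ (1 - (n : ℝ) / a) * ((TT (G := G) x₀ t).card : ℝ) :=
          mul_le_mul_of_nonneg_left (ih ht) h0
      _ ≤ ((TT (G := G) x₀ (c :: t)).card : ℝ) :=
          step x₀ n a ha hsep c t hlen1 hred


end Qf

end SepWordAux

/-- Let `G` be a finite group acting on a nonempty finite set `X`, separating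
`X` in order `(n, a)` (with `0 < n < a`): for every `Y ⊆ X` with `|Y| ≤ n`,
every orbit of the pointwise stabilizer `G_Y` on `X \\ Y` has size at least `a`.
Then for every nontrivial reduced word `w` of length `n` on `k` generators, the
number of `k`-tuples `(g_1, …, g_k) ∈ G^k` with `w(g_1, …, g_k) ≠ 1` is at
least `(1 - n/a)^n · |G|^k`. -/
theorem finite_separating_word_probability {G X : Type*} [Group G] [Fintype G]
    [Fintype X] [Nonempty X] [MulAction G X]
    (n a : ℕ) (hn : 0 < n) (ha : 0 < a) (hna : n < a)
    (hsep : ∀ Y : Finset X, Y.card ≤ n → ∀ x : X, x ∉ Y →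
      a ≤ {z : X | ∃ g : G, (∀ y ∈ Y, g • y = y) ∧ g • x = z}.ncard)
    {k : ℕ} (w : FreeGroup (Fin k)) (hw : w ≠ 1)
    (hlen : (FreeGroup.toWord w).length = n) :
    (1 - (n : ℝ) / a) ^ n * (Fintype.card G : ℝ) ^ k ≤
      Nat.card {g : Fin k → G // FreeGroup.lift g w ≠ 1} := by
  classical
  set x₀ : X := Classical.arbitrary X with hx₀
  set L : List (Fin k × Bool) := w.toWord with hL
  have hredL : ∀ (u v : List (Fin k × Bool)) (x : Fin k) (b : Bool),
      L ≠ u ++ (x, b) :: (x, !b) :: v := by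
    intro u v x b hEq
    have hr : FreeGroup.reduce L = L := FreeGroup.reduce_toWord w
    rw [hEq] at hr
    exact FreeGroup.reduce.not hr
  have hTL := SepWordAux.chain (G := G) x₀ n a ha hna hsep L hredL hlen L (List.suffix_refl L)
  rw [hlen] at hTL
  -- every tuple in `TT` fails to satisfy `w`
  have hsub : SepWordAux.TT (G := G) x₀ L ⊆
      Finset.univ.filter (fun g : Fin k → G => FreeGroup.lift g w ≠ 1) := by
    intro g hg
    have hnd : (SepWordAux.pts x₀ g L).Nodup := SepWordAux.mem_TT.mp hg
    rw [Finset.mem_filter]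
    refine ⟨Finset.mem_univ _, fun h1 => ?_⟩
    have hlift : FreeGroup.lift g w = SepWordAux.wp g L := by
      conv_lhs => rw [← FreeGroup.mk_toWord (x := w)]
      rw [FreeGroup.lift_mk]
      rfl
    have hfix : SepWordAux.wp g L • x₀ = SepWordAux.wp g ([] : List (Fin k × Bool)) • x₀ := by
      rw [← hlift, h1]
      rfl
    have hnd' : (L.tails.map (fun t' => SepWordAux.wp g t' • x₀)).Nodup := hnd
    have inj := List.inj_on_of_nodup_map hnd'
    have hLnil : L = [] := inj ((List.mem_tails _ _).mpr (List.suffix_refl L))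
      ((List.mem_tails _ _).mpr List.nil_suffix) hfix
    rw [hLnil] at hlen
    simp at hlen
    omega
  have hcard : (Nat.card {g : Fin k → G // FreeGroup.lift g w ≠ 1} : ℝ) =
      ((Finset.univ.filter (fun g : Fin k → G => FreeGroup.lift g w ≠ 1)).card : ℝ) := by
    rw [Nat.card_eq_fintype_card, Fintype.card_subtype]
  rw [hcard]
  refine le_trans hTL ?_
  exact_mod_cast Nat.cast_le.mpr (Finset.card_le_card hsub)
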